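/- For every x ∈ A[G] one has x·x* − (det x)·1 ∈ J. -/

import Mathlib

open TensorProduct

/-- The two-sided ideal `J ⊆ A[G]` generated by the elements
`g² − (tr ρ(g))·g + (det ρ(g))·1`, for `g ∈ G`. -/
noncomputable def blrIdeal {A : Type} [CommRing A]
    {V : Type} [AddCommGroup V] [Module A V] [Module.Free A V] [Module.Finite A V]
    {G : Type} [Group G] (ρ : Representation A G V) :
    TwoSidedIdeal (MonoidAlgebra A G) :=
  TwoSidedIdeal.span
    {x : MonoidAlgebra A G | ∃ g : G,
      x = MonoidAlgebra.of A G g * MonoidAlgebra.of A G g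
        - LinearMap.trace A V (ρ g) • MonoidAlgebra.of A G g
        + LinearMap.det (ρ g) • (1 : MonoidAlgebra A G)}

/-- The `A`-linear anti-involution `* : A[G] → A[G]` determined on group elements by
`g* = (det ρ(g))·g⁻¹`. -/
noncomputable def blrStar {A : Type} [CommRing A]
    {V : Type} [AddCommGroup V] [Module A V] [Module.Free A V] [Module.Finite A V]
    {G : Type} [Group G] (ρ : Representation A G V)
    (x : MonoidAlgebra A G) : MonoidAlgebra A G :=
  Finsupp.sum x.coeff fun g a => (a * LinearMap.det (ρ g)) • MonoidAlgebra.of A G g⁻¹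

set_option linter.unusedSectionVars false
set_option maxHeartbeats 1000000

section Det
variable {A : Type} [CommRing A] [Nontrivial A]
    {V : Type} [AddCommGroup V] [Module A V] [Module.Free A V] [Module.Finite A V]

theorem blrDetAdd (hrank : Module.finrank A V = 2) (f k : Module.End A V) :
    LinearMap.det (f + k) = LinearMap.det f + LinearMap.det k
      + LinearMap.trace A V f * LinearMap.trace A V k - LinearMap.trace A V (f * k) := by
  let b : Module.Basis (Fin 2) A V := (Module.finBasis A V).reindex (finCongr hrank)
  rw [← LinearMap.det_toMatrix b, ← LinearMap.det_toMatrix b f, ← LinearMap.det_toMatrix b k,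
    LinearMap.trace_eq_matrix_trace A b, LinearMap.trace_eq_matrix_trace A b,
    LinearMap.trace_eq_matrix_trace A b, map_add]
  rw [show LinearMap.toMatrix b b (f * k) = LinearMap.toMatrix b b f * LinearMap.toMatrix b b k
    from LinearMap.toMatrix_mul b f k]
  simp only [Matrix.det_fin_two, Matrix.trace_fin_two, Matrix.add_apply, Matrix.mul_apply,
    Fin.sum_univ_two]
  ring

theorem blrDetSmul (hrank : Module.finrank A V = 2) (a : A) (f : Module.End A V) :
    LinearMap.det (a • f) = a * a * LinearMap.det f := by
  let b : Module.Basis (Fin 2) A V := (Module.finBasis A V).reindex (finCongr hrank)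
  rw [← LinearMap.det_toMatrix b, ← LinearMap.det_toMatrix b f, map_smul]
  simp only [Matrix.det_fin_two, Matrix.smul_apply, smul_eq_mul]
  ring

theorem blrDetZero (hrank : Module.finrank A V = 2) :
    LinearMap.det (0 : Module.End A V) = 0 := by
  let b : Module.Basis (Fin 2) A V := (Module.finBasis A V).reindex (finCongr hrank)
  rw [← LinearMap.det_toMatrix b, map_zero]
  simp [Matrix.det_fin_two]

end Det

section BLR
variable {A : Type} [CommRing A] [Nontrivial A]
    {V : Type} [AddCommGroup V] [Module A V] [Module.Free A V] [Module.Finite A V]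
    {G : Type} [Group G] (ρ : Representation A G V)

/-- trace of `ρ(x)` -/
noncomputable def blrT (x : MonoidAlgebra A G) : A :=
  LinearMap.trace A V (ρ.asAlgebraHom x)

/-- det of `ρ(x)` -/
noncomputable def blrD (x : MonoidAlgebra A G) : A :=
  LinearMap.det (ρ.asAlgebraHom x)

theorem blrT_add (x y : MonoidAlgebra A G) : blrT ρ (x + y) = blrT ρ x + blrT ρ y := by
  simp [blrT, map_add]

theorem blrT_smul (r : A) (x : MonoidAlgebra A G) : blrT ρ (r • x) = r * blrT ρ x := by
  simp [blrT, map_smul]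

theorem blrT_of (g : G) : blrT ρ (MonoidAlgebra.of A G g) = LinearMap.trace A V (ρ g) := by
  rw [blrT, Representation.asAlgebraHom_of]

theorem blrD_add (hrank : Module.finrank A V = 2) (x y : MonoidAlgebra A G) :
    blrD ρ (x + y) = blrD ρ x + blrD ρ y + blrT ρ x * blrT ρ y - blrT ρ (x * y) := by
  show LinearMap.det (ρ.asAlgebraHom (x + y)) = _
  rw [map_add, blrDetAdd hrank]
  show _ + LinearMap.trace A V (ρ.asAlgebraHom x) * LinearMap.trace A V (ρ.asAlgebraHom y)
      - LinearMap.trace A V (ρ.asAlgebraHom x * ρ.asAlgebraHom y) = _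
  rw [← map_mul ρ.asAlgebraHom]
  rfl

theorem blrD_smul (hrank : Module.finrank A V = 2) (r : A) (x : MonoidAlgebra A G) :
    blrD ρ (r • x) = r * r * blrD ρ x := by
  show LinearMap.det (ρ.asAlgebraHom (r • x)) = _
  rw [map_smul, blrDetSmul hrank]
  rfl

theorem blrD_of (g : G) : blrD ρ (MonoidAlgebra.of A G g) = LinearMap.det (ρ g) := by
  show LinearMap.det (ρ.asAlgebraHom (MonoidAlgebra.of A G g)) = _
  rw [Representation.asAlgebraHom_of]

theorem gen_mem (g : G) :
    MonoidAlgebra.of A G g * MonoidAlgebra.of A G g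
      - LinearMap.trace A V (ρ g) • MonoidAlgebra.of A G g
      + LinearMap.det (ρ g) • (1 : MonoidAlgebra A G) ∈ blrIdeal ρ :=
  TwoSidedIdeal.subset_span ⟨g, rfl⟩

theorem Jsmul (a : A) {x : MonoidAlgebra A G} (hx : x ∈ blrIdeal ρ) :
    a • x ∈ blrIdeal ρ := by
  rw [Algebra.smul_def]; exact TwoSidedIdeal.mul_mem_left _ _ _ hx

theorem sElt_mem (g : G) :
    MonoidAlgebra.of A G g + LinearMap.det (ρ g) • MonoidAlgebra.of A G g⁻¹
      - LinearMap.trace A V (ρ g) • (1 : MonoidAlgebra A G) ∈ blrIdeal ρ := by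
  have h := TwoSidedIdeal.mul_mem_right _ _ (MonoidAlgebra.of A G g⁻¹) (gen_mem ρ g)
  have e : (MonoidAlgebra.of A G g * MonoidAlgebra.of A G g
        - LinearMap.trace A V (ρ g) • MonoidAlgebra.of A G g
        + LinearMap.det (ρ g) • (1 : MonoidAlgebra A G)) * MonoidAlgebra.of A G g⁻¹
      = MonoidAlgebra.of A G g + LinearMap.det (ρ g) • MonoidAlgebra.of A G g⁻¹
      - LinearMap.trace A V (ρ g) • (1 : MonoidAlgebra A G) := by
    rw [add_mul, sub_mul, smul_mul_assoc, smul_mul_assoc, mul_assoc, ← map_mul, ← map_mul,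
      mul_inv_cancel, map_one, mul_one, one_mul]
    abel
  rwa [e] at h

theorem blrStar_add (x y : MonoidAlgebra A G) :
    blrStar ρ (x + y) = blrStar ρ x + blrStar ρ y := by
  unfold blrStar
  rw [MonoidAlgebra.coeff_add]
  exact Finsupp.sum_add_index' (fun g => by simp) (fun g a b => by rw [add_mul, add_smul])

theorem blrStar_smul (r : A) (x : MonoidAlgebra A G) :
    blrStar ρ (r • x) = r • blrStar ρ x := by
  unfold blrStar
  rw [MonoidAlgebra.coeff_smul, Finsupp.sum_smul_index' (fun i => by simp), Finsupp.smul_sum]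
  apply Finsupp.sum_congr
  intro g _
  rw [smul_eq_mul, smul_smul, mul_assoc]

theorem blrStar_of (g : G) :
    blrStar ρ (MonoidAlgebra.of A G g)
      = LinearMap.det (ρ g) • MonoidAlgebra.of A G g⁻¹ := by
  show Finsupp.sum (Finsupp.single g (1:A))
    (fun g a => (a * LinearMap.det (ρ g)) • MonoidAlgebra.of A G g⁻¹) = _
  rw [Finsupp.sum_single_index (by simp), one_mul]

theorem sigma_mem (x : MonoidAlgebra A G) :
    x + blrStar ρ x - blrT ρ x • (1 : MonoidAlgebra A G) ∈ blrIdeal ρ := by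
  induction x using MonoidAlgebra.induction_on with
  | of g => rw [blrStar_of, blrT_of]; exact sElt_mem ρ g
  | add u v hu hv =>
      have e : u + v + blrStar ρ (u + v) - blrT ρ (u + v) • (1 : MonoidAlgebra A G)
          = (u + blrStar ρ u - blrT ρ u • (1 : MonoidAlgebra A G))
            + (v + blrStar ρ v - blrT ρ v • (1 : MonoidAlgebra A G)) := by
        rw [blrStar_add, blrT_add, add_smul]; abel
      rw [e]; exact add_mem hu hv
  | smul r u hu =>
      have e : r • u + blrStar ρ (r • u) - blrT ρ (r • u) • (1 : MonoidAlgebra A G)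
          = r • (u + blrStar ρ u - blrT ρ u • (1 : MonoidAlgebra A G)) := by
        rw [blrStar_smul, blrT_smul, smul_sub, smul_add, ← smul_smul]
      rw [e]; exact Jsmul ρ r hu

/-- the symmetric bilinear companion of `Θ` -/
noncomputable def blrPhi (u v : MonoidAlgebra A G) : MonoidAlgebra A G :=
  u * v + v * u - blrT ρ u • v - blrT ρ v • u
    + (blrT ρ u * blrT ρ v - blrT ρ (u * v)) • (1 : MonoidAlgebra A G)

theorem blrPhi_add_right (u v w : MonoidAlgebra A G) :
    blrPhi ρ u (v + w) = blrPhi ρ u v + blrPhi ρ u w := by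
  unfold blrPhi
  simp only [mul_add, add_mul, blrT_add, smul_add, add_smul]
  module

theorem blrPhi_smul_right (r : A) (u v : MonoidAlgebra A G) :
    blrPhi ρ u (r • v) = r • blrPhi ρ u v := by
  unfold blrPhi
  simp only [mul_smul_comm, smul_mul_assoc, blrT_smul, smul_add, smul_sub, smul_smul]
  module

theorem blrPhi_add_left (u v w : MonoidAlgebra A G) :
    blrPhi ρ (u + v) w = blrPhi ρ u w + blrPhi ρ v w := by
  unfold blrPhi
  simp only [mul_add, add_mul, blrT_add, smul_add, add_smul]
  module

theorem blrPhi_smul_left (r : A) (u v : MonoidAlgebra A G) :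
    blrPhi ρ (r • u) v = r • blrPhi ρ u v := by
  unfold blrPhi
  simp only [mul_smul_comm, smul_mul_assoc, blrT_smul, smul_add, smul_sub, smul_smul]
  module

theorem blrPhi_of_of (g h : G) : blrPhi ρ (MonoidAlgebra.of A G g) (MonoidAlgebra.of A G h)
    ∈ blrIdeal ρ := by
  have m1 := TwoSidedIdeal.mul_mem_left _ (MonoidAlgebra.of A G h) _ (sElt_mem ρ g)
  have m2 := sElt_mem ρ (g * h)
  have m3 := TwoSidedIdeal.mul_mem_right _ _
    (LinearMap.det (ρ g) • MonoidAlgebra.of A G g⁻¹) (sElt_mem ρ h)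
  have m4 := Jsmul ρ (LinearMap.trace A V (ρ h)) (sElt_mem ρ g)
  have key := sub_mem (add_mem (add_mem m1 m2) (neg_mem m3)) m4
  have e : MonoidAlgebra.of A G h * (MonoidAlgebra.of A G g
          + LinearMap.det (ρ g) • MonoidAlgebra.of A G g⁻¹
          - LinearMap.trace A V (ρ g) • (1 : MonoidAlgebra A G))
        + (MonoidAlgebra.of A G (g * h)
          + LinearMap.det (ρ (g * h)) • MonoidAlgebra.of A G (g * h)⁻¹
          - LinearMap.trace A V (ρ (g * h)) • (1 : MonoidAlgebra A G))
        + -((MonoidAlgebra.of A G h + LinearMap.det (ρ h) • MonoidAlgebra.of A G h⁻¹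
          - LinearMap.trace A V (ρ h) • (1 : MonoidAlgebra A G))
            * (LinearMap.det (ρ g) • MonoidAlgebra.of A G g⁻¹))
        - LinearMap.trace A V (ρ h) • (MonoidAlgebra.of A G g
          + LinearMap.det (ρ g) • MonoidAlgebra.of A G g⁻¹
          - LinearMap.trace A V (ρ g) • (1 : MonoidAlgebra A G))
      = blrPhi ρ (MonoidAlgebra.of A G g) (MonoidAlgebra.of A G h) := by
    have hdet : LinearMap.det (ρ (g * h)) = LinearMap.det (ρ g) * LinearMap.det (ρ h) := by
      rw [map_mul]; exact LinearMap.det.map_mul _ _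
    have hofmul : MonoidAlgebra.of A G (g * h) = MonoidAlgebra.of A G g * MonoidAlgebra.of A G h :=
      map_mul _ _ _
    have hofinv : MonoidAlgebra.of A G (g * h)⁻¹
        = MonoidAlgebra.of A G h⁻¹ * MonoidAlgebra.of A G g⁻¹ := by
      rw [mul_inv_rev]; exact map_mul _ _ _
    have hT : blrT ρ (MonoidAlgebra.of A G g * MonoidAlgebra.of A G h)
        = LinearMap.trace A V (ρ (g * h)) := by
      rw [← hofmul, blrT_of]
    unfold blrPhi
    rw [hdet, hofmul, hofinv, hT, blrT_of, blrT_of]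
    simp only [mul_add, add_mul, mul_sub, sub_mul, smul_mul_assoc, mul_smul_comm, smul_smul,
      mul_one, one_mul]
    module
  rwa [e] at key

theorem blrPhi_mem (u v : MonoidAlgebra A G) : blrPhi ρ u v ∈ blrIdeal ρ := by
  induction u using MonoidAlgebra.induction_on with
  | of g =>
      induction v using MonoidAlgebra.induction_on with
      | of h => exact blrPhi_of_of ρ g h
      | add u v hu hv => rw [blrPhi_add_right]; exact add_mem hu hv
      | smul r u hu => rw [blrPhi_smul_right]; exact Jsmul ρ r hu
  | add u' v' hu hv => rw [blrPhi_add_left]; exact add_mem hu hv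
  | smul r u hu => rw [blrPhi_smul_left]; exact Jsmul ρ r hu

theorem theta_mem (hrank : Module.finrank A V = 2) (x : MonoidAlgebra A G) :
    x * x - blrT ρ x • x + blrD ρ x • (1 : MonoidAlgebra A G) ∈ blrIdeal ρ := by
  induction x using MonoidAlgebra.induction_on with
  | of g =>
      rw [blrT_of, blrD_of]
      exact gen_mem ρ g
  | add u v hu hv =>
      have e : (u + v) * (u + v) - blrT ρ (u + v) • (u + v)
            + blrD ρ (u + v) • (1 : MonoidAlgebra A G)
          = (u * u - blrT ρ u • u + blrD ρ u • (1 : MonoidAlgebra A G))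
            + (v * v - blrT ρ v • v + blrD ρ v • (1 : MonoidAlgebra A G))
            + blrPhi ρ u v := by
        unfold blrPhi
        rw [blrD_add ρ hrank]
        simp only [blrT_add, mul_add, add_mul, add_smul, smul_add]
        module
      rw [e]
      exact add_mem (add_mem hu hv) (blrPhi_mem ρ u v)
  | smul r u hu =>
      have e : (r • u) * (r • u) - blrT ρ (r • u) • (r • u)
            + blrD ρ (r • u) • (1 : MonoidAlgebra A G)
          = (r * r) • (u * u - blrT ρ u • u + blrD ρ u • (1 : MonoidAlgebra A G)) := by
        rw [blrD_smul ρ hrank]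
        simp only [blrT_smul, smul_mul_assoc, mul_smul_comm, smul_smul, smul_add, smul_sub]
        module
      rw [e]
      exact Jsmul ρ (r * r) hu

end BLR

/-- for every `x ∈ A[G]` one has `x·x* − (det x)·1 ∈ J`, where
`det x = det(ρ(x))`. -/
theorem mul_star_sub_det_mem_ideal
    {A : Type} [CommRing A] [IsLocalRing A] [IsNoetherianRing A]
    [IsAdicComplete (IsLocalRing.maximalIdeal A) A]
    {V : Type} [AddCommGroup V] [Module A V] [Module.Free A V] [Module.Finite A V]
    (hrank : Module.finrank A V = 2)
    {G : Type} [Group G] (ρ : Representation A G V)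
    (hirr : ∀ (K : Type) [Field K] [Algebra A K],
      (∀ a ∈ IsLocalRing.maximalIdeal A, algebraMap A K a = 0) →
      ∀ W : Submodule K (K ⊗[A] V),
        (∀ (g : G), ∀ x ∈ W, LinearMap.baseChange K (ρ g) x ∈ W) → W = ⊥ ∨ W = ⊤) :
    ∀ x : MonoidAlgebra A G,
      x * blrStar ρ x
        - LinearMap.det (ρ.asAlgebraHom x) • (1 : MonoidAlgebra A G) ∈ blrIdeal ρ := by
  intro x
  have hσ := TwoSidedIdeal.mul_mem_left (blrIdeal ρ) x _ (sigma_mem ρ x)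
  have hθ := theta_mem ρ hrank x
  have key := sub_mem hσ hθ
  have e : x * (x + blrStar ρ x - blrT ρ x • (1 : MonoidAlgebra A G))
        - (x * x - blrT ρ x • x + blrD ρ x • (1 : MonoidAlgebra A G))
      = x * blrStar ρ x - LinearMap.det (ρ.asAlgebraHom x) • (1 : MonoidAlgebra A G) := by
    rw [show blrD ρ x = LinearMap.det (ρ.asAlgebraHom x) from rfl]
    simp only [mul_add, mul_sub, mul_smul_comm, mul_one]
    module
  rwa [e] at key
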